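/- If x = ∑_{k=1}^∞ ε_k/(q_1⋯q_k) = u/v is rational with v ≥ 1 and |u| ≤ v, then for every n, σⁿ(x) = u_n/v where u_n = u·q_1⋯q_n − v·∑_{j=1}^{n} ε_j q_{j+1}⋯q_n is an integer with |u_n| ≤ v; hence by pigeonhole there exist n < n+m with σⁿ(x) = σ^{n+m}(x). -/

import Mathlib

/-- The shift operator of a (positive) Cantor expansion (0-based indexing). -/
noncomputable def cantorShift (q ε : ℕ → ℕ) (n : ℕ) : ℝ :=
  ∑' k : ℕ, (ε (n + k) : ℝ) / ∏ i ∈ Finset.Ico n (n + k + 1), (q i : ℝ)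

/-- The integer `u_n = u·q_1⋯q_n − v·∑_{j=1}^{n} ε_j q_{j+1}⋯q_n` (0-based indexing). -/
def cantorNum (q ε : ℕ → ℕ) (u : ℤ) (v : ℕ) (n : ℕ) : ℤ :=
  u * ∏ i ∈ Finset.range n, (q i : ℤ)
    - v * ∑ j ∈ Finset.range n, (ε j : ℤ) * ∏ i ∈ Finset.Ico (j + 1) n, (q i : ℤ)

section aux

variable {q ε : ℕ → ℕ}

lemma prodQ_pos (hq : ∀ k, 2 ≤ q k) (n m : ℕ) :
    0 < ∏ i ∈ Finset.Ico n m, (q i : ℝ) := by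
  apply Finset.prod_pos
  intro i _
  have := hq i
  positivity

lemma prodQ_ge (hq : ∀ k, 2 ≤ q k) (n k : ℕ) :
    (2 : ℝ) ^ k ≤ ∏ i ∈ Finset.Ico n (n + k), (q i : ℝ) := by
  have : (2 : ℝ) ^ k = ∏ _i ∈ Finset.Ico n (n + k), (2 : ℝ) := by
    rw [Finset.prod_const, Nat.card_Ico]
    simp
  rw [this]
  apply Finset.prod_le_prod (fun i _ => by norm_num)
  intro i _
  exact_mod_cast hq i

lemma cantor_summable (hq : ∀ k, 2 ≤ q k) (hε : ∀ k, ε k ≤ q k - 1) (n : ℕ) :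
    Summable (fun k : ℕ => (ε (n + k) : ℝ) / ∏ i ∈ Finset.Ico n (n + k + 1), (q i : ℝ)) := by
  refine Summable.of_nonneg_of_le (fun k => ?_) (fun k => ?_) summable_geometric_two
  · 
    have := prodQ_pos hq n (n + k + 1)
    positivity
  · have hsplit : ∏ i ∈ Finset.Ico n (n + k + 1), (q i : ℝ)
        = (∏ i ∈ Finset.Ico n (n + k), (q i : ℝ)) * (q (n + k) : ℝ) :=
      Finset.prod_Ico_succ_top (by omega) _
    have hP := prodQ_pos hq n (n + k)
    have hqpos : (0 : ℝ) < (q (n + k) : ℝ) := by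
      have := hq (n + k); positivity
    have hεle : (ε (n + k) : ℝ) ≤ (q (n + k) : ℝ) := by
      have := hε (n + k); have := hq (n + k)
      exact_mod_cast by omega
    rw [hsplit]
    have h1 : (ε (n + k) : ℝ) / ((∏ i ∈ Finset.Ico n (n + k), (q i : ℝ)) * (q (n + k) : ℝ))
        ≤ (q (n + k) : ℝ) / ((∏ i ∈ Finset.Ico n (n + k), (q i : ℝ)) * (q (n + k) : ℝ)) := by
      apply div_le_div_of_nonneg_right hεle (by positivity) |>.trans_eq rfl
    calc (ε (n + k) : ℝ) / ((∏ i ∈ Finset.Ico n (n + k), (q i : ℝ)) * (q (n + k) : ℝ))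
        ≤ (q (n + k) : ℝ) / ((∏ i ∈ Finset.Ico n (n + k), (q i : ℝ)) * (q (n + k) : ℝ)) := h1
      _ = 1 / ∏ i ∈ Finset.Ico n (n + k), (q i : ℝ) := by
          field_simp
      _ ≤ 1 / (2 : ℝ) ^ k := by
          apply one_div_le_one_div_of_le (by positivity) (prodQ_ge hq n k)
      _ = (1 / 2 : ℝ) ^ k := by rw [one_div, one_div, inv_pow]

lemma cantor_shift_nonneg (hq : ∀ k, 2 ≤ q k) (n : ℕ) :
    0 ≤ cantorShift q ε n := by
  apply tsum_nonneg
  intro k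
  have := prodQ_pos hq n (n + k + 1)
  positivity

lemma cantor_shift_le_one (hq : ∀ k, 2 ≤ q k) (hε : ∀ k, ε k ≤ q k - 1) (n : ℕ) :
    cantorShift q ε n ≤ 1 := by
  apply Summable.tsum_le_of_sum_le (cantor_summable hq hε n)
  intro s
  obtain ⟨N, hN⟩ := s.exists_nat_subset_range
  have hsub : ∑ k ∈ s, (ε (n + k) : ℝ) / ∏ i ∈ Finset.Ico n (n + k + 1), (q i : ℝ)
      ≤ ∑ k ∈ Finset.range N, (ε (n + k) : ℝ) / ∏ i ∈ Finset.Ico n (n + k + 1), (q i : ℝ) := by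
    apply Finset.sum_le_sum_of_subset_of_nonneg hN
    intro k _ _
    have := prodQ_pos hq n (n + k + 1)
    positivity
  refine hsub.trans ?_
  have hterm : ∀ k, (ε (n + k) : ℝ) / ∏ i ∈ Finset.Ico n (n + k + 1), (q i : ℝ)
      ≤ 1 / (∏ i ∈ Finset.Ico n (n + k), (q i : ℝ))
        - 1 / (∏ i ∈ Finset.Ico n (n + (k + 1)), (q i : ℝ)) := by
    intro k
    have hsplit : ∏ i ∈ Finset.Ico n (n + k + 1), (q i : ℝ)
        = (∏ i ∈ Finset.Ico n (n + k), (q i : ℝ)) * (q (n + k) : ℝ) :=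
      Finset.prod_Ico_succ_top (by omega) _
    have hP := prodQ_pos hq n (n + k)
    have hq2 := hq (n + k)
    have hqpos : (0 : ℝ) < (q (n + k) : ℝ) := by positivity
    have hεle : (ε (n + k) : ℝ) ≤ (q (n + k) : ℝ) - 1 := by
      have := hε (n + k)
      have h1 : ε (n + k) + 1 ≤ q (n + k) := by omega
      have : ((ε (n + k) + 1 : ℕ) : ℝ) ≤ ((q (n + k) : ℕ) : ℝ) := by exact_mod_cast h1
      push_cast at this
      linarith
    have heq : n + (k + 1) = n + k + 1 := by omega
    rw [heq, hsplit]
    have hrw : 1 / (∏ i ∈ Finset.Ico n (n + k), (q i : ℝ))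
        - 1 / ((∏ i ∈ Finset.Ico n (n + k), (q i : ℝ)) * (q (n + k) : ℝ))
        = ((q (n + k) : ℝ) - 1) / ((∏ i ∈ Finset.Ico n (n + k), (q i : ℝ)) * (q (n + k) : ℝ)) := by
      field_simp
    rw [hrw]
    gcongr
  calc ∑ k ∈ Finset.range N, (ε (n + k) : ℝ) / ∏ i ∈ Finset.Ico n (n + k + 1), (q i : ℝ)
      ≤ ∑ k ∈ Finset.range N, (1 / (∏ i ∈ Finset.Ico n (n + k), (q i : ℝ))
          - 1 / (∏ i ∈ Finset.Ico n (n + (k + 1)), (q i : ℝ))) :=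
        Finset.sum_le_sum fun k _ => hterm k
    _ = 1 / (∏ i ∈ Finset.Ico n (n + 0), (q i : ℝ))
          - 1 / (∏ i ∈ Finset.Ico n (n + N), (q i : ℝ)) :=
        Finset.sum_range_sub' (fun k => 1 / (∏ i ∈ Finset.Ico n (n + k), (q i : ℝ))) N
    _ ≤ 1 := by
        have := prodQ_pos hq n (n + N)
        simp only [Nat.add_zero, Finset.Ico_self, Finset.prod_empty]
        have : 0 ≤ 1 / (∏ i ∈ Finset.Ico n (n + N), (q i : ℝ)) := by positivity
        linarith

lemma cantor_shift_rec (hq : ∀ k, 2 ≤ q k) (hε : ∀ k, ε k ≤ q k - 1) (n : ℕ) :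
    cantorShift q ε (n + 1) = (q n : ℝ) * cantorShift q ε n - (ε n : ℝ) := by
  have hqpos : (0 : ℝ) < (q n : ℝ) := by have := hq n; positivity
  have h0 : cantorShift q ε n
      = (ε n : ℝ) / (q n : ℝ)
        + ∑' k : ℕ, (ε (n + (k + 1)) : ℝ) / ∏ i ∈ Finset.Ico n (n + (k + 1) + 1), (q i : ℝ) := by
    unfold cantorShift
    rw [Summable.tsum_eq_zero_add (cantor_summable hq hε n)]
    congr 1
    simp
  have htail : ∀ k : ℕ, (ε (n + (k + 1)) : ℝ) / ∏ i ∈ Finset.Ico n (n + (k + 1) + 1), (q i : ℝ)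
      = (q n : ℝ)⁻¹ * ((ε ((n + 1) + k) : ℝ)
          / ∏ i ∈ Finset.Ico (n + 1) ((n + 1) + k + 1), (q i : ℝ)) := by
    intro k
    have hsplit : ∏ i ∈ Finset.Ico n (n + (k + 1) + 1), (q i : ℝ)
        = (q n : ℝ) * ∏ i ∈ Finset.Ico (n + 1) (n + (k + 1) + 1), (q i : ℝ) :=
      Finset.prod_eq_prod_Ico_succ_bot (by omega) _
    have h1 : n + (k + 1) = (n + 1) + k := by omega
    rw [hsplit, h1]
    have hP := prodQ_pos hq (n + 1) ((n + 1) + k + 1)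
    field_simp
  rw [tsum_congr htail, tsum_mul_left] at h0
  unfold cantorShift at h0 ⊢
  rw [h0]
  field_simp
  ring

lemma cantorNum_succ (q ε : ℕ → ℕ) (u : ℤ) (v : ℕ) (n : ℕ) :
    cantorNum q ε u v (n + 1) = (q n : ℤ) * cantorNum q ε u v n - (v : ℤ) * (ε n : ℤ) := by
  unfold cantorNum
  rw [Finset.prod_range_succ, Finset.sum_range_succ, Finset.Ico_self, Finset.prod_empty]
  have h : ∑ j ∈ Finset.range n, (ε j : ℤ) * ∏ i ∈ Finset.Ico (j + 1) (n + 1), (q i : ℤ)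
      = ∑ j ∈ Finset.range n, ((ε j : ℤ) * ∏ i ∈ Finset.Ico (j + 1) n, (q i : ℤ)) * (q n : ℤ) := by
    refine Finset.sum_congr rfl fun j hj => ?_
    have hjn : j < n := Finset.mem_range.mp hj
    rw [Finset.prod_Ico_succ_top (by omega : j + 1 ≤ n)]
    ring
  rw [h, ← Finset.sum_mul]
  ring

end aux

/-- If `x = u/v` is rational with `v ≥ 1`, `|u| ≤ v`, then
`σⁿ(x) = u_n/v` with `|u_n| ≤ v` for every `n`, and hence (pigeonhole) there are
`n` and `m ≥ 1` with `σⁿ(x) = σ^{n+m}(x)`. -/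
theorem cantor_rational_shift_values (q ε : ℕ → ℕ) (hq : ∀ k, 2 ≤ q k)
    (hε : ∀ k, ε k ≤ q k - 1) (u : ℤ) (v : ℕ) (hv : 1 ≤ v) (hu : |u| ≤ (v : ℤ)) (x : ℝ)
    (hx : x = ∑' k : ℕ, (ε k : ℝ) / ∏ i ∈ Finset.range (k + 1), (q i : ℝ))
    (hxr : x = (u : ℝ) / v) :
    (∀ n : ℕ, cantorShift q ε n = (cantorNum q ε u v n : ℝ) / v
        ∧ |cantorNum q ε u v n| ≤ (v : ℤ))
      ∧ ∃ n m : ℕ, 1 ≤ m ∧ cantorShift q ε n = cantorShift q ε (n + m) := by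
  have hvR : (0 : ℝ) < (v : ℝ) := by exact_mod_cast hv
  -- base case : cantorShift q ε 0 = x
  have hbase : cantorShift q ε 0 = x := by
    rw [hx]
    unfold cantorShift
    apply tsum_congr
    intro k
    rw [Finset.range_eq_Ico]
    norm_num
  have key : ∀ n, cantorShift q ε n = (cantorNum q ε u v n : ℝ) / v := by
    intro n
    induction n with
    | zero =>
      rw [hbase, hxr]
      simp [cantorNum]
    | succ n ih =>
      rw [cantor_shift_rec hq hε n, ih, cantorNum_succ]
      push_cast
      field_simp
  have hbound : ∀ n, 0 ≤ cantorNum q ε u v n ∧ cantorNum q ε u v n ≤ (v : ℤ) := by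
    intro n
    have h0 := cantor_shift_nonneg (ε := ε) hq n
    have h1 := cantor_shift_le_one hq hε n
    rw [key n] at h0 h1
    constructor
    · have : (0 : ℝ) ≤ (cantorNum q ε u v n : ℝ) := by
        have := mul_nonneg (le_of_lt hvR) h0
        rw [mul_div_cancel₀ _ (ne_of_gt hvR)] at this
        exact this
      exact_mod_cast this
    · have : (cantorNum q ε u v n : ℝ) ≤ (v : ℝ) := by
        rw [div_le_one hvR] at h1
        exact h1
      exact_mod_cast this
  refine ⟨fun n => ⟨key n, ?_⟩, ?_⟩
  · obtain ⟨h0, h1⟩ := hbound n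
    rw [abs_le]
    constructor
    · linarith [show (0:ℤ) ≤ v by exact_mod_cast Nat.zero_le v]
    · exact h1
  · -- pigeonhole
    have hmem : ∀ n : ℕ, cantorNum q ε u v n ∈ Finset.Icc (0 : ℤ) (v : ℤ) := by
      intro n
      rw [Finset.mem_Icc]
      exact hbound n
    obtain ⟨a, b, hab, heq⟩ := Finite.exists_ne_map_eq_of_infinite
      (fun n : ℕ => (⟨cantorNum q ε u v n, hmem n⟩ : (Finset.Icc (0 : ℤ) (v : ℤ))))
    have heq' : cantorNum q ε u v a = cantorNum q ε u v b := by
      simpa using congrArg Subtype.val heq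
    rcases lt_or_gt_of_ne hab with h | h
    · refine ⟨a, b - a, by omega, ?_⟩
      have : a + (b - a) = b := by omega
      rw [this, key a, key b, heq']
    · refine ⟨b, a - b, by omega, ?_⟩
      have : b + (a - b) = a := by omega
      rw [this, key a, key b, heq']
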